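/- arXiv:1803.05826 — 9 statements merged into one kernel-verified Lean document; each statement's English description precedes it below -/
import Mathlib

section
/- If (A, ∘, ·) is a skew brace, then (A, ∘, ·ᵒᵖ), where a ·ᵒᵖ b = b · a, is also a skew brace. -/
structure SkewBrace (A : Type*) where
  circ : A → A → A
  cinv : A → A
  ce : A
  mul : A → A → A
  inv : A → A
  e : A
  circ_assoc : ∀ a b c, circ (circ a b) c = circ a (circ b c)
  ce_circ : ∀ a, circ ce a = a
  circ_ce : ∀ a, circ a ce = a
  cinv_circ : ∀ a, circ (cinv a) a = ce
  circ_cinv : ∀ a, circ a (cinv a) = ce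
  mul_assoc : ∀ a b c, mul (mul a b) c = mul a (mul b c)
  e_mul : ∀ a, mul e a = a
  mul_e : ∀ a, mul a e = a
  inv_mul : ∀ a, mul (inv a) a = e
  mul_inv : ∀ a, mul a (inv a) = e
  distrib : ∀ a b c, circ a (mul b c) = mul (mul (circ a b) (inv a)) (circ a c)

def SkewBrace.lam {A : Type*} (B : SkewBrace A) (a b : A) : A :=
  B.mul (B.inv a) (B.circ a b)

def SkewBrace.rho {A : Type*} (B : SkewBrace A) (a b : A) : A :=
  B.mul (B.circ a b) (B.inv a)

/-- If `(A, ∘, ·)` is a skew brace, so is `(A, ∘, ·ᵒᵖ)`. -/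
theorem skewBrace_op {A : Type*} (B : SkewBrace A) :
    ∃ B' : SkewBrace A, B'.circ = B.circ ∧ B'.mul = fun a b => B.mul b a := by
  refine ⟨{
    circ := B.circ, cinv := B.cinv, ce := B.ce,
    mul := fun a b => B.mul b a, inv := B.inv, e := B.e,
    circ_assoc := B.circ_assoc, ce_circ := B.ce_circ, circ_ce := B.circ_ce,
    cinv_circ := B.cinv_circ, circ_cinv := B.circ_cinv,
    mul_assoc := fun a b c => (B.mul_assoc c b a).symm,
    e_mul := B.mul_e, mul_e := B.e_mul,
    inv_mul := B.mul_inv, mul_inv := B.inv_mul,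
    distrib := fun a b c => by
      simpa [B.mul_assoc] using B.distrib a c b }, rfl, rfl⟩
end

section
/- Let (A, ∘, ·) be a skew brace and X_A = End(A, ·) the monoid of group endomorphisms of (A, ·). Then a ⋄ χ := λ_a ∘ χ ∘ ρ_a⁻¹ defines a left action of (A, ∘) on the set X_A, where λ_a(b) = a⁻¹ · (a ∘ b) and ρ_a(b) = (a ∘ b) · a⁻¹. -/
/-- The diamond action `a ⋄ χ = λ_a ∘ χ ∘ ρ_a⁻¹` on `End(A, ·)`. -/
def SkewBrace.dia {A : Type*} (B : SkewBrace A) (a : A) (χ : A → A) : A → A :=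
  fun b => B.lam a (χ (B.rho (B.cinv a) b))

namespace SkewBrace
variable {A : Type*} (B : SkewBrace A)

lemma mul_left_cancel' {a b c : A} (h : B.mul a b = B.mul a c) : b = c := by
  have := congrArg (B.mul (B.inv a)) h
  rwa [← B.mul_assoc, ← B.mul_assoc, B.inv_mul, B.e_mul, B.e_mul] at this

lemma circ_e (a : A) : B.circ a B.e = a := by
  have h := B.distrib a B.e B.e
  rw [B.mul_e] at h
  have h2 : B.mul (B.circ a B.e) B.e
      = B.mul (B.circ a B.e) (B.mul (B.inv a) (B.circ a B.e)) := by
    rw [B.mul_e, ← B.mul_assoc]; exact h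
  have h3 := B.mul_left_cancel' h2
  have := congrArg (B.mul a) h3
  rw [B.mul_e, ← B.mul_assoc, B.mul_inv, B.e_mul] at this
  exact this.symm

lemma ce_eq_e : B.ce = B.e := by
  have h1 := B.circ_e B.ce
  have h2 := B.ce_circ B.e
  rw [h2] at h1; exact h1.symm

lemma inv_e' : B.inv B.e = B.e := by
  have := B.mul_inv B.e
  rwa [B.e_mul] at this

lemma cinv_ce : B.cinv B.ce = B.ce := by
  have := B.circ_ce (B.cinv B.ce)
  rw [B.cinv_circ] at this; exact this.symm

lemma lam_mul (a x y : A) :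
    B.lam a (B.mul x y) = B.mul (B.lam a x) (B.lam a y) := by
  unfold lam
  rw [B.distrib, B.mul_assoc, B.mul_assoc]

lemma lam_e (a : A) : B.lam a B.e = B.e := by
  unfold lam; rw [B.circ_e, B.inv_mul]

lemma rho_mul (a x y : A) :
    B.rho a (B.mul x y) = B.mul (B.rho a x) (B.rho a y) := by
  unfold rho
  rw [B.distrib, B.mul_assoc, B.mul_assoc]

lemma inv_unique {u v : A} (h : B.mul u v = B.e) : v = B.inv u := by
  have := congrArg (B.mul (B.inv u)) h
  rwa [← B.mul_assoc, B.inv_mul, B.e_mul, B.mul_e] at this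

lemma cinv_unique {u v : A} (h : B.circ u v = B.ce) : v = B.cinv u := by
  have := congrArg (B.circ (B.cinv u)) h
  rwa [← B.circ_assoc, B.cinv_circ, B.ce_circ, B.circ_ce] at this

lemma lam_inv (a b : A) : B.lam a (B.inv b) = B.inv (B.lam a b) := by
  apply B.inv_unique
  rw [← B.lam_mul, B.mul_inv, B.lam_e]

lemma circ_lam (a b : A) : B.circ a b = B.mul a (B.lam a b) := by
  unfold lam
  rw [← B.mul_assoc, B.mul_inv, B.e_mul]

lemma inv_circ (a b : A) :
    B.inv (B.circ a b) = B.mul (B.mul (B.inv a) (B.circ a (B.inv b))) (B.inv a) := by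
  apply Eq.symm
  apply B.inv_unique
  have : B.mul (B.inv a) (B.circ a (B.inv b)) = B.lam a (B.inv b) := rfl
  rw [this, B.lam_inv, B.circ_lam a b]
  rw [B.mul_assoc a (B.lam a b), ← B.mul_assoc (B.lam a b), B.mul_inv (B.lam a b),
    B.e_mul, B.mul_inv a]

lemma lam_circ (a b x : A) : B.lam (B.circ a b) x = B.lam a (B.lam b x) := by
  unfold lam
  rw [B.circ_assoc, B.inv_circ a b, B.distrib a (B.inv b) (B.circ b x)]
  rw [B.mul_assoc, B.mul_assoc, B.mul_assoc]

lemma rho_circ (a b x : A) : B.rho (B.circ a b) x = B.rho a (B.rho b x) := by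
  unfold rho
  rw [B.circ_assoc, B.inv_circ a b, B.distrib a (B.circ b x) (B.inv b)]
  rw [B.mul_assoc, B.mul_assoc, B.mul_assoc]

lemma cinv_circ_eq (a b : A) :
    B.cinv (B.circ a b) = B.circ (B.cinv b) (B.cinv a) := by
  apply Eq.symm
  apply B.cinv_unique
  rw [B.circ_assoc, ← B.circ_assoc b, B.circ_cinv b, B.ce_circ, B.circ_cinv]

end SkewBrace

/-- `⋄` defines a left action of `(A, ∘)` on the monoid `End(A, ·)`. -/
theorem skewBrace_dia_action {A : Type*} (B : SkewBrace A) :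
    (∀ (a : A) (χ : A → A), (∀ x y, χ (B.mul x y) = B.mul (χ x) (χ y)) →
      ∀ x y, B.dia a χ (B.mul x y) = B.mul (B.dia a χ x) (B.dia a χ y)) ∧
    (∀ χ : A → A, B.dia B.ce χ = χ) ∧
    (∀ (a b : A) (χ : A → A), B.dia (B.circ a b) χ = B.dia a (B.dia b χ)) := by
  refine ⟨?_, ?_, ?_⟩
  · intro a χ hχ x y
    unfold SkewBrace.dia
    rw [B.rho_mul, hχ, B.lam_mul]
  · intro χ
    funext x
    unfold SkewBrace.dia SkewBrace.lam SkewBrace.rho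
    have hinv : B.inv B.ce = B.e := by rw [B.ce_eq_e, B.inv_e']
    rw [B.cinv_ce, hinv, B.ce_circ, B.mul_e, B.ce_circ, B.e_mul]
  · intro a b χ
    funext x
    unfold SkewBrace.dia
    rw [B.cinv_circ_eq, B.rho_circ, B.lam_circ]
end

section
/- Let (A, ∘) be a group with a braiding operator r: A × A → A × A, r(a,b) = (a ▷ b, a ◁ b). Then the operation a · b := a ∘ (ā ▷ b), where ā is the ∘-inverse of a, defines a group structure on A such that (A, ∘, ·) is a skew brace, and a ▷ b = λ_a(b) = a⁻¹ · (a ∘ b). -/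
structure BraidedGroup (A : Type*) where
  circ : A → A → A
  cinv : A → A
  ce : A
  circ_assoc : ∀ a b c, circ (circ a b) c = circ a (circ b c)
  ce_circ : ∀ a, circ ce a = a
  circ_ce : ∀ a, circ a ce = a
  cinv_circ : ∀ a, circ (cinv a) a = ce
  circ_cinv : ∀ a, circ a (cinv a) = ce
  r : A × A → A × A
  r_rule1 : ∀ a b c : A,
    r (circ a b, c) =
      ((r (a, (r (b, c)).1)).1, circ (r (a, (r (b, c)).1)).2 (r (b, c)).2)
  r_rule2 : ∀ a b c : A,
    r (a, circ b c) =
      (circ (r (a, b)).1 (r ((r (a, b)).2, c)).1, (r ((r (a, b)).2, c)).2)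
  r_unit1 : ∀ a, r (a, ce) = (ce, a)
  r_unit2 : ∀ a, r (ce, a) = (a, ce)
  r_comp : ∀ a b, circ (r (a, b)).1 (r (a, b)).2 = circ a b

namespace BraidHelper

variable {A : Type*} (G : BraidedGroup A)

def tr (a b : A) : A := (G.r (a, b)).1
def tl (a b : A) : A := (G.r (a, b)).2

lemma inv_right_uniq {a x : A} (h : G.circ a x = G.ce) : x = G.cinv a := by
  have h2 := congrArg (G.circ (G.cinv a)) h
  rwa [← G.circ_assoc, G.cinv_circ, G.ce_circ, G.circ_ce] at h2

lemma cinv_ce : G.cinv G.ce = G.ce :=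
  (inv_right_uniq G (G.ce_circ G.ce)).symm

lemma cinv_circ_eq (a b : A) :
    G.cinv (G.circ a b) = G.circ (G.cinv b) (G.cinv a) := by
  refine (inv_right_uniq G ?_).symm
  rw [G.circ_assoc, ← G.circ_assoc b, G.circ_cinv, G.ce_circ, G.circ_cinv]

lemma tr_assoc (a b c : A) : tr G (G.circ a b) c = tr G a (tr G b c) := by
  simpa [tr] using congrArg Prod.fst (G.r_rule1 a b c)

lemma tr_circ (a b c : A) :
    tr G a (G.circ b c) = G.circ (tr G a b) (tr G (tl G a b) c) := by
  simpa [tr, tl] using congrArg Prod.fst (G.r_rule2 a b c)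

lemma tr_ce (a : A) : tr G a G.ce = G.ce := by
  simpa [tr] using congrArg Prod.fst (G.r_unit1 a)

lemma ce_tr (a : A) : tr G G.ce a = a := by
  simpa [tr] using congrArg Prod.fst (G.r_unit2 a)

lemma rcomp (a b : A) : G.circ (tr G a b) (tl G a b) = G.circ a b :=
  G.r_comp a b

lemma tl_eq (a b : A) :
    tl G a b = G.circ (G.cinv (tr G a b)) (G.circ a b) := by
  have h := congrArg (G.circ (G.cinv (tr G a b))) (rcomp G a b)
  rwa [← G.circ_assoc, G.cinv_circ, G.ce_circ] at h

lemma tr_inv_cancel (a b : A) : tr G a (tr G (G.cinv a) b) = b := by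
  rw [← tr_assoc, G.circ_cinv, ce_tr]

lemma tr_inv_cancel' (a b : A) : tr G (G.cinv a) (tr G a b) = b := by
  rw [← tr_assoc, G.cinv_circ, ce_tr]

def bmul (a b : A) : A := G.circ a (tr G (G.cinv a) b)
def binv (a : A) : A := tr G a (G.cinv a)

lemma bmul_ce (a : A) : bmul G a G.ce = a := by
  rw [bmul, tr_ce, G.circ_ce]

lemma ce_bmul (a : A) : bmul G G.ce a = a := by
  rw [bmul, cinv_ce, ce_tr, G.ce_circ]

lemma key_elem (a b : A) :
    G.circ (tl G a b) (G.cinv b) = G.circ (G.cinv (tr G a b)) a := by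
  rw [tl_eq, G.circ_assoc, G.circ_assoc, G.circ_cinv, G.circ_ce]

lemma bmul_assoc (a b c : A) :
    bmul G (bmul G a b) c = bmul G a (bmul G b c) := by
  rw [bmul, bmul, bmul, bmul, tr_circ, ← tr_assoc,
    key_elem, cinv_circ_eq, G.circ_assoc]

lemma bmul_binv (a : A) : bmul G a (binv G a) = G.ce := by
  rw [bmul, binv, tr_inv_cancel', G.circ_cinv]

lemma binv_bmul (a : A) : bmul G (binv G a) a = G.ce := by
  have h1 : bmul G a (bmul G (binv G a) (binv G (binv G a))) = binv G (binv G a) := by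
    rw [← bmul_assoc, bmul_binv, ce_bmul]
  calc bmul G (binv G a) a
      = bmul G (bmul G (binv G a) a) (bmul G (binv G a) (binv G (binv G a))) := by
        rw [bmul_binv, bmul_ce]
    _ = bmul G (binv G a) (bmul G a (bmul G (binv G a) (binv G (binv G a)))) := by
        rw [bmul_assoc]
    _ = bmul G (binv G a) (binv G (binv G a)) := by rw [h1]
    _ = G.ce := bmul_binv G _

lemma circ_eq_bmul_tr (a b : A) : G.circ a b = bmul G a (tr G a b) := by
  rw [bmul, tr_inv_cancel']

lemma cinv_binv (a : A) : G.cinv (binv G a) = tl G a (G.cinv a) := by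
  refine (inv_right_uniq G ?_).symm
  rw [binv, rcomp, G.circ_cinv]

lemma lam_eq (a b : A) :
    tr G a b = bmul G (binv G a) (G.circ a b) := by
  rw [bmul, cinv_binv, binv, ← tr_circ, ← G.circ_assoc, G.cinv_circ, G.ce_circ]

lemma tr_bmul (a b c : A) :
    tr G a (bmul G b c) = bmul G (tr G a b) (tr G a c) := by
  rw [bmul, bmul, tr_circ, ← tr_assoc, ← tr_assoc, key_elem]

lemma rearrange (a x y : A) :
    bmul G (bmul G (bmul G a x) (binv G a)) (bmul G a y)
      = bmul G a (bmul G x y) := by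
  rw [bmul_assoc, bmul_assoc, ← bmul_assoc G (binv G a), binv_bmul, ce_bmul]

lemma distrib (a b c : A) :
    G.circ a (bmul G b c)
      = bmul G (bmul G (G.circ a b) (binv G a)) (G.circ a c) := by
  rw [circ_eq_bmul_tr G a b, circ_eq_bmul_tr G a c, rearrange, ← tr_bmul,
    ← circ_eq_bmul_tr]

end BraidHelper

def BraidHelper.toSkewBrace {A : Type*} (G : BraidedGroup A) : SkewBrace A where
  circ := G.circ
  cinv := G.cinv
  ce := G.ce
  mul := BraidHelper.bmul G
  inv := BraidHelper.binv G
  e := G.ce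
  circ_assoc := G.circ_assoc
  ce_circ := G.ce_circ
  circ_ce := G.circ_ce
  cinv_circ := G.cinv_circ
  circ_cinv := G.circ_cinv
  mul_assoc := BraidHelper.bmul_assoc G
  e_mul := BraidHelper.ce_bmul G
  mul_e := BraidHelper.bmul_ce G
  inv_mul := BraidHelper.binv_bmul G
  mul_inv := BraidHelper.bmul_binv G
  distrib := BraidHelper.distrib G

/-- A braiding operator on `(A, ∘)` yields a skew brace with `a · b = a ∘ (ā ▷ b)`,
and then `a ▷ b = λ_a(b)`. -/
theorem braidedGroup_gives_skewBrace {A : Type*} (G : BraidedGroup A) :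
    ∃ B : SkewBrace A, B.circ = G.circ ∧ B.ce = G.ce ∧ B.cinv = G.cinv ∧
      (∀ a b, B.mul a b = G.circ a ((G.r (G.cinv a, b)).1)) ∧
      (∀ a b, (G.r (a, b)).1 = B.mul (B.inv a) (B.circ a b)) := by
  exact ⟨BraidHelper.toSkewBrace G, rfl, rfl, rfl, fun _ _ => rfl,
    fun a b => BraidHelper.lam_eq G a b⟩
end

section
/- Let (A, ∘, ·) be a skew brace. Define r: A × A → A × A by r(a, b) = (λ_a(b), \overline{λ_a(b)} ∘ a ∘ b) where λ_a(b) = a⁻¹ · (a ∘ b) and x̄ is the ∘-inverse of x. Then r is a braiding operator on (A, ∘): it satisfies r(m × id) = (id × m)(r × id)(id × r), r(id × m) = (m × id)(id × r)(r × id), the unit conditions, and m ∘ r = m. -/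
namespace SkewBraceAux

variable {A : Type*}

/-- Type synonym carrying the `∘`-group. -/
def Cg {A : Type*} (_B : SkewBrace A) : Type _ := A
/-- Type synonym carrying the `·`-group. -/
def Mg {A : Type*} (_B : SkewBrace A) : Type _ := A

/-- identity map into the `∘`-group synonym -/
def cg (B : SkewBrace A) (a : A) : Cg B := a
/-- identity map into the `·`-group synonym -/
def mg (B : SkewBrace A) (a : A) : Mg B := a

instance (B : SkewBrace A) : Group (Cg B) where
  mul := B.circ
  one := B.ce
  inv := B.cinv
  mul_assoc := B.circ_assoc
  one_mul := B.ce_circ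
  mul_one := B.circ_ce
  inv_mul_cancel := B.cinv_circ

instance (B : SkewBrace A) : Group (Mg B) where
  mul := B.mul
  one := B.e
  inv := B.inv
  mul_assoc := B.mul_assoc
  one_mul := B.e_mul
  mul_one := B.mul_e
  inv_mul_cancel := B.inv_mul

variable (B : SkewBrace A)

lemma mg_mul (a b : A) : mg B (B.mul a b) = mg B a * mg B b := rfl
lemma mg_inv (a : A) : mg B (B.inv a) = (mg B a)⁻¹ := rfl
lemma mg_e : mg B B.e = 1 := rfl
lemma mg_injective : Function.Injective (mg B) := fun _ _ h => h
lemma cg_mul (a b : A) : cg B (B.circ a b) = cg B a * cg B b := rfl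
lemma cg_inv (a : A) : cg B (B.cinv a) = (cg B a)⁻¹ := rfl
lemma cg_ce : cg B B.ce = 1 := rfl
lemma cg_injective : Function.Injective (cg B) := fun _ _ h => h

lemma circ_e (a : A) : B.circ a B.e = a := by
  have h := B.distrib a B.e B.e
  rw [B.e_mul] at h
  apply mg_injective B
  have h' : mg B (B.circ a B.e) = (mg B (B.circ a B.e) * (mg B a)⁻¹) * mg B (B.circ a B.e) :=
    congrArg (mg B) h
  have h2 : mg B (B.circ a B.e) * (mg B a)⁻¹ = 1 :=
    mul_right_cancel (b := mg B (B.circ a B.e)) (by rw [one_mul]; exact h'.symm)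
  have := mul_eq_one_iff_eq_inv.mp h2
  rw [this]; exact inv_inv _

lemma e_eq_ce : B.e = B.ce := by
  have h1 := circ_e B B.ce
  rw [B.ce_circ] at h1; exact h1

lemma circ_mul_lam (a b : A) : B.circ a b = B.mul a (B.lam a b) := by
  apply mg_injective B
  rw [show B.lam a b = B.mul (B.inv a) (B.circ a b) from rfl, mg_mul, mg_mul, mg_inv]
  group

lemma lam_mul (a b c : A) : B.lam a (B.mul b c) = B.mul (B.lam a b) (B.lam a c) := by
  show B.mul (B.inv a) (B.circ a (B.mul b c)) = _
  rw [B.distrib]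
  apply mg_injective B
  rw [show B.lam a b = B.mul (B.inv a) (B.circ a b) from rfl,
      show B.lam a c = B.mul (B.inv a) (B.circ a c) from rfl]
  simp only [mg_mul, mg_inv]
  group

lemma lam_e (a : A) : B.lam a B.e = B.e := by
  show B.mul (B.inv a) (B.circ a B.e) = B.e
  rw [circ_e, B.inv_mul]

lemma lam_ce (a : A) : B.lam a B.ce = B.ce := by
  rw [← e_eq_ce B, lam_e]

lemma lam_inv (a b : A) : B.lam a (B.inv b) = B.inv (B.lam a b) := by
  have h : B.mul (B.lam a b) (B.lam a (B.inv b)) = B.e := by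
    rw [← lam_mul, B.mul_inv, lam_e]
  apply mg_injective B
  have h' : mg B (B.lam a b) * mg B (B.lam a (B.inv b)) = 1 := congrArg (mg B) h
  rw [mg_inv]
  exact (mul_eq_one_iff_inv_eq.mp h').symm

lemma lam_circ (a b c : A) : B.lam (B.circ a b) c = B.lam a (B.lam b c) := by
  show B.mul (B.inv (B.circ a b)) (B.circ (B.circ a b) c) = B.mul (B.inv a) (B.circ a (B.lam b c))
  rw [B.circ_assoc, circ_mul_lam B a b]
  conv_rhs => rw [show B.lam b c = B.mul (B.inv b) (B.circ b c) from rfl, B.distrib,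
    circ_mul_lam B a (B.inv b), lam_inv]
  apply mg_injective B
  simp only [mg_mul, mg_inv]
  group

lemma lam_key (a b c : A) :
    B.lam a (B.circ b c) =
      B.circ (B.lam a b) (B.lam (B.circ (B.cinv (B.lam a b)) (B.circ a b)) c) := by
  have h1 : B.circ (B.lam a b) (B.circ (B.cinv (B.lam a b)) (B.circ a b)) = B.circ a b := by
    apply cg_injective B
    simp only [cg_mul, cg_inv]
    group
  refine Eq.symm ?_
  calc B.circ (B.lam a b) (B.lam (B.circ (B.cinv (B.lam a b)) (B.circ a b)) c)
      = B.mul (B.lam a b) (B.lam (B.lam a b) (B.lam (B.circ (B.cinv (B.lam a b)) (B.circ a b)) c)) := circ_mul_lam ..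
    _ = B.mul (B.lam a b) (B.lam (B.circ (B.lam a b) (B.circ (B.cinv (B.lam a b)) (B.circ a b))) c) :=
        congrArg (B.mul (B.lam a b)) (lam_circ B (B.lam a b) (B.circ (B.cinv (B.lam a b)) (B.circ a b)) c).symm
    _ = B.mul (B.lam a b) (B.lam (B.circ a b) c) := by rw [h1]
    _ = B.mul (B.lam a b) (B.lam a (B.lam b c)) := by rw [lam_circ]
    _ = B.lam a (B.mul b (B.lam b c)) := by rw [lam_mul]
    _ = B.lam a (B.circ b c) := by rw [← circ_mul_lam]

end SkewBraceAux

open SkewBraceAux in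
/-- The map `r(a,b) = (λ_a(b), 𝜆_a(b)‾ ∘ a ∘ b)` associated to a skew brace
is a braiding operator on `(A, ∘)`. -/
theorem skewBrace_gives_braiding {A : Type*} (B : SkewBrace A)
    (r : A × A → A × A)
    (hr : ∀ a b, r (a, b) =
      (B.lam a b, B.circ (B.cinv (B.lam a b)) (B.circ a b))) :
    (∀ a b c, r (B.circ a b, c) =
      ((r (a, (r (b, c)).1)).1, B.circ (r (a, (r (b, c)).1)).2 (r (b, c)).2)) ∧
    (∀ a b c, r (a, B.circ b c) =
      (B.circ (r (a, b)).1 (r ((r (a, b)).2, c)).1, (r ((r (a, b)).2, c)).2)) ∧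
    (∀ a, r (a, B.ce) = (B.ce, a)) ∧
    (∀ a, r (B.ce, a) = (a, B.ce)) ∧
    (∀ a b, B.circ (r (a, b)).1 (r (a, b)).2 = B.circ a b) := by
  refine ⟨?_, ?_, ?_, ?_, ?_⟩
  · intro a b c
    simp only [hr, Prod.mk.injEq]
    refine ⟨lam_circ B a b c, ?_⟩
    rw [lam_circ B a b c]
    apply cg_injective B
    simp only [cg_mul, cg_inv]
    group
  · intro a b c
    simp only [hr, Prod.mk.injEq]
    refine ⟨lam_key B a b c, ?_⟩
    rw [lam_key B a b c]
    apply cg_injective B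
    simp only [cg_mul, cg_inv]
    group
  · intro a
    simp only [hr, Prod.mk.injEq]
    refine ⟨lam_ce B a, ?_⟩
    rw [lam_ce, B.circ_ce]
    apply cg_injective B
    rw [cg_mul, cg_inv, cg_ce]
    group
  · intro a
    simp only [hr, Prod.mk.injEq]
    have h1 : B.lam B.ce a = a := by
      show B.mul (B.inv B.ce) (B.circ B.ce a) = a
      rw [B.ce_circ, ← e_eq_ce B]
      apply mg_injective B
      rw [mg_mul, mg_inv, mg_e]
      group
    refine ⟨h1, ?_⟩
    rw [h1, B.ce_circ, B.cinv_circ]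
  · intro a b
    simp only [hr]
    apply cg_injective B
    simp only [cg_mul, cg_inv]
    group
end

section
/- Let (A, ∘, r) be a group with braiding operator. Then the map k = r²: A × A → A × A together with the multiplication action m_A makes (A, m_A, r²) a braided action of (A, ∘, r): it satisfies k(m × id) = (m × id)(id × k)(r × id)(id × k), k(id × m) = (id × m)(r × id)(id × k)(r × id), k(e, a) = (e, a), and m ∘ k = m. -/
/-- `r` acting on the first two tensor factors. -/
def stepR {A X : Type*} (r : A × A → A × A) (p : A × A × X) : A × A × X :=
  ((r (p.1, p.2.1)).1, (r (p.1, p.2.1)).2, p.2.2)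

/-- a map `k : A × X → A × X` acting on the last two tensor factors. -/
def stepK {A X : Type*} (k : A × X → A × X) (p : A × A × X) : A × A × X :=
  (p.1, k p.2)

/-- the multiplication `m × id`. -/
def collM {A X : Type*} (m : A → A → A) (p : A × A × X) : A × X :=
  (m p.1 p.2.1, p.2.2)

/-- the action `id × m_X`. -/
def collMX {A X : Type*} (mX : A → X → X) (p : A × A × X) : A × X :=
  (p.1, mX p.2.1 p.2.2)

section Aux

variable {A : Type*} (G : BraidedGroup A)

theorem BG.left_cancel {a b c : A} (h : G.circ a b = G.circ a c) : b = c := by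
  have := congrArg (G.circ (G.cinv a)) h
  simpa [← G.circ_assoc, G.cinv_circ, G.ce_circ] using this

theorem BG.right_cancel {a b c : A} (h : G.circ b a = G.circ c a) : b = c := by
  have := congrArg (fun x => G.circ x (G.cinv a)) h
  simpa [G.circ_assoc, G.circ_cinv, G.circ_ce] using this

/-- hexagon 1 as maps: `r ∘ (m × id) = (id × m) ∘ R1 ∘ R2`. -/
theorem BG.L1 (p : A × A × A) :
    G.r (collM G.circ p) = collMX G.circ (stepR G.r (stepK G.r p)) := by
  obtain ⟨a, b, c⟩ := p
  simp [collM, collMX, stepR, stepK, G.r_rule1]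

/-- hexagon 2 as maps: `r ∘ (id × m) = (m × id) ∘ R2 ∘ R1`. -/
theorem BG.L2 (p : A × A × A) :
    G.r (collMX G.circ p) = collM G.circ (stepK G.r (stepR G.r p)) := by
  obtain ⟨a, b, c⟩ := p
  simp [collM, collMX, stepR, stepK, G.r_rule2]

theorem BG.L4 (p : A × A × A) :
    collM G.circ (stepR G.r p) = collM G.circ p := by
  obtain ⟨a, b, c⟩ := p
  simp [collM, stepR, G.r_comp]

/-- triple products are preserved by `R1`. -/
theorem BG.prodR (p : A × A × A) :
    G.circ (stepR G.r p).1 (G.circ (stepR G.r p).2.1 (stepR G.r p).2.2)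
      = G.circ p.1 (G.circ p.2.1 p.2.2) := by
  obtain ⟨a, b, c⟩ := p
  simp [stepR, ← G.circ_assoc, G.r_comp]

/-- triple products are preserved by `R2`. -/
theorem BG.prodK (p : A × A × A) :
    G.circ (stepK G.r p).1 (G.circ (stepK G.r p).2.1 (stepK G.r p).2.2)
      = G.circ p.1 (G.circ p.2.1 p.2.2) := by
  obtain ⟨a, b, c⟩ := p
  simp [stepK, G.r_comp]

/-- the braid relation for `r`. -/
theorem BG.braid (p : A × A × A) :
    stepR G.r (stepK G.r (stepR G.r p)) = stepK G.r (stepR G.r (stepK G.r p)) := by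
  obtain ⟨a, b, c⟩ := p
  set L := stepR G.r (stepK G.r (stepR G.r (a, b, c))) with hL
  set R := stepK G.r (stepR G.r (stepK G.r (a, b, c))) with hR
  have h1 : L.1 = R.1 := by
    have key : (G.r (G.circ a b, c)).1
        = (G.r ((G.r (a, b)).1, (G.r ((G.r (a, b)).2, c)).1)).1 := by
      conv_lhs => rw [← G.r_comp a b, G.r_rule1]
    have key' : (G.r (G.circ a b, c)).1 = (G.r (a, (G.r (b, c)).1)).1 := by
      rw [G.r_rule1]
    simp only [hL, hR, stepR, stepK]
    rw [← key, key']
  have h3 : L.2.2 = R.2.2 := by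
    have key : (G.r (a, G.circ b c)).2
        = (G.r ((G.r (a, (G.r (b, c)).1)).2, (G.r (b, c)).2)).2 := by
      conv_lhs => rw [← G.r_comp b c, G.r_rule2]
    have key' : (G.r (a, G.circ b c)).2 = (G.r ((G.r (a, b)).2, c)).2 := by
      rw [G.r_rule2]
    simp only [hL, hR, stepR, stepK]
    rw [← key', key]
  have hprod : G.circ L.1 (G.circ L.2.1 L.2.2) = G.circ R.1 (G.circ R.2.1 R.2.2) := by
    rw [hL, hR, BG.prodR, BG.prodK, BG.prodR, BG.prodK, BG.prodR, BG.prodK]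
  have h2 : L.2.1 = R.2.1 := by
    rw [h1, h3] at hprod
    exact BG.right_cancel G (BG.left_cancel G hprod)
  calc L = (L.1, L.2.1, L.2.2) := rfl
    _ = (R.1, R.2.1, R.2.2) := by rw [h1, h2, h3]
    _ = R := rfl

end Aux

/-- For a group with braiding `(A, ∘, r)`, `(A, m_A, r²)` is a braided action. -/
theorem rsq_braided_action {A : Type*} (G : BraidedGroup A) :
    (∀ p : A × A × A, (G.r ∘ G.r) (collM G.circ p) =
      collM G.circ (stepK (G.r ∘ G.r) (stepR G.r (stepK (G.r ∘ G.r) p)))) ∧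
    (∀ p : A × A × A, (G.r ∘ G.r) (collMX G.circ p) =
      collMX G.circ (stepR G.r (stepK (G.r ∘ G.r) (stepR G.r p)))) ∧
    (∀ a : A, (G.r ∘ G.r) (G.ce, a) = (G.ce, a)) ∧
    (∀ p : A × A, G.circ ((G.r ∘ G.r) p).1 ((G.r ∘ G.r) p).2 = G.circ p.1 p.2) := by
  refine ⟨?_, ?_, ?_, ?_⟩
  · intro p
    have e1 : (G.r ∘ G.r) (collM G.circ p)
        = collM G.circ (stepK G.r (stepR G.r (stepR G.r (stepK G.r p)))) := by
      simp only [Function.comp_apply]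
      rw [BG.L1, BG.L2]
    have e2 : stepK (G.r ∘ G.r) (stepR G.r (stepK (G.r ∘ G.r) p))
        = stepK G.r (stepK G.r (stepR G.r (stepK G.r (stepK G.r p)))) := by
      simp [stepK]
    rw [e1, e2, ← BG.braid, ← BG.braid, BG.L4]
  · intro p
    have e1 : (G.r ∘ G.r) (collMX G.circ p)
        = collMX G.circ (stepR G.r (stepK G.r (stepK G.r (stepR G.r p)))) := by
      simp only [Function.comp_apply]
      rw [BG.L2, BG.L1]
    have e2 : collMX G.circ (stepR G.r (stepK (G.r ∘ G.r) (stepR G.r p)))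
        = collMX G.circ (stepR G.r (stepK G.r (stepK G.r (stepR G.r p)))) := by
      simp [stepK]
    rw [e1, e2]
  · intro a
    simp [G.r_unit1, G.r_unit2]
  · intro p
    obtain ⟨a, b⟩ := p
    have h := G.r_comp (G.r (a, b)).1 (G.r (a, b)).2
    simp only [Prod.mk.eta] at h
    simp [h, G.r_comp]
end

section
/- Let (A, ∘, r) be a group with braiding and let (X, m_X, k) be a braided action. Then k: A × X → A × X satisfies the reflection equation with respect to r: (r × id_X)(id_A × k)(r × id_X)(id_A × k) = (id_A × k)(r × id_X)(id_A × k)(r × id_X) as maps on A × A × X. -/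
/-- Left cancellation in a `BraidedGroup`. -/
theorem BraidedGroup.cancel_left {A : Type*} (G : BraidedGroup A) {a u v : A}
    (h : G.circ a u = G.circ a v) : u = v := by
  have h' := congrArg (G.circ (G.cinv a)) h
  rwa [← G.circ_assoc, ← G.circ_assoc, G.cinv_circ, G.ce_circ, G.ce_circ] at h'

/-- Any braided action satisfies the reflection equation. -/
theorem braidedAction_solves_reflection {A X : Type*} (G : BraidedGroup A)
    (mX : A → X → X)
    (hmX_e : ∀ x, mX G.ce x = x)
    (hmX : ∀ a b x, mX (G.circ a b) x = mX a (mX b x))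
    (k : A × X → A × X)
    (h1 : ∀ p : A × A × X,
      k (collM G.circ p) = collM G.circ (stepK k (stepR G.r (stepK k p))))
    (h2 : ∀ p : A × A × X,
      k (collMX mX p) = collMX mX (stepR G.r (stepK k (stepR G.r p))))
    (h3 : ∀ x : X, k (G.ce, x) = (G.ce, x))
    (h4 : ∀ p : A × X, mX (k p).1 (k p).2 = mX p.1 p.2) :
    ∀ p : A × A × X,
      stepR G.r (stepK k (stepR G.r (stepK k p))) =
        stepK k (stepR G.r (stepK k (stepR G.r p))) := by
  rintro ⟨a, b, x⟩
  -- abbreviations for the left-hand side data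
  set A1 : A := (G.r (a, (k (b, x)).1)).1 with hA1
  set B1 : A := (G.r (a, (k (b, x)).1)).2 with hB1
  set y1 : X := (k (b, x)).2 with hy1
  -- abbreviations for the right-hand side data
  set B2 : A := (G.r ((G.r (a, b)).1, (k ((G.r (a, b)).2, x)).1)).2 with hB2
  set y2 : X := (k ((G.r (a, b)).2, x)).2 with hy2
  set A2 : A := (G.r ((G.r (a, b)).1, (k ((G.r (a, b)).2, x)).1)).1 with hA2
  -- h2 at (a, (k (b,x)).1, (k (b,x)).2)
  have H2a := h2 (a, (k (b, x)).1, (k (b, x)).2)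
  have H2b := h2 (a, b, x)
  have H4b := h4 (b, x)
  simp only [stepR, stepK, collM, collMX] at H2a H2b
  rw [H4b] at H2a
  -- First components agree
  have E1 : (G.r (A1, (k (B1, y1)).1)).1 = A2 := by
    have := H2a.symm.trans H2b
    have := congrArg Prod.fst this
    simpa [hA1, hB1, hy1, hA2] using this
  -- h1 instances
  have H1a := h1 (a, b, x)
  have H1b := h1 ((G.r (a, b)).1, (G.r (a, b)).2, x)
  simp only [stepR, stepK, collM, collMX] at H1a H1b
  rw [G.r_comp] at H1b
  have E : (G.circ A1 (k (B1, y1)).1, (k (B1, y1)).2)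
      = (G.circ A2 (k (B2, y2)).1, (k (B2, y2)).2) := by
    have := H1a.symm.trans H1b
    simpa [hA1, hB1, hy1, hA2, hB2, hy2] using this
  have E3 : (k (B1, y1)).2 = (k (B2, y2)).2 := (Prod.ext_iff.mp E).2
  have Ec : G.circ A1 (k (B1, y1)).1 = G.circ A2 (k (B2, y2)).1 :=
    (Prod.ext_iff.mp E).1
  -- second component via r_comp and cancellation
  have E2 : (G.r (A1, (k (B1, y1)).1)).2 = (k (B2, y2)).1 := by
    apply G.cancel_left (a := A2)
    calc G.circ A2 (G.r (A1, (k (B1, y1)).1)).2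
        = G.circ (G.r (A1, (k (B1, y1)).1)).1 (G.r (A1, (k (B1, y1)).1)).2 := by
          rw [E1]
      _ = G.circ A1 (k (B1, y1)).1 := G.r_comp _ _
      _ = G.circ A2 (k (B2, y2)).1 := Ec
  -- conclude
  simp only [stepR, stepK]
  refine Prod.ext ?_ (Prod.ext ?_ ?_)
  · simpa [hA1, hB1, hy1, hA2] using E1
  · simpa [hA1, hB1, hy1] using E2
  · simpa [hA1, hB1, hy1, hy2] using E3
end

section
/- Let (A, ∘, r) be a group with braiding and (X, m_X, k) a generalized braided action (k satisfies the reflection equation with respect to r together with relations k(m_A × id) = (m_A × id)(id × k)(r × id)(id × k), k(id × m_X) = (id × m_X)(r × id)(id × k)(r × id), and k(e, x) = (e, x)). Define k_Y = (r × id_X)(id_A × k)(r × id_X) on A × (A × X). Then k_Y satisfies the reflection equation with respect to r over the set Y = A × X. -/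
namespace BGaux

variable {A : Type*} (G : BraidedGroup A)

/-- left projection of r -/
def rf (a b : A) : A := (G.r (a, b)).1
/-- right projection of r -/
def rs (a b : A) : A := (G.r (a, b)).2

lemma cancel_left {a x y : A} (h : G.circ a x = G.circ a y) : x = y := by
  have h2 := congrArg (G.circ (G.cinv a)) h
  rwa [← G.circ_assoc, ← G.circ_assoc, G.cinv_circ, G.ce_circ, G.ce_circ] at h2

lemma cancel_right {a x y : A} (h : G.circ x a = G.circ y a) : x = y := by
  have h2 := congrArg (fun z => G.circ z (G.cinv a)) h
  simp only [G.circ_assoc, G.circ_cinv, G.circ_ce] at h2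
  exact h2

lemma rcomp (a b : A) : G.circ (rf G a b) (rs G a b) = G.circ a b := G.r_comp a b

lemma rule1f (a b c : A) :
    rf G (G.circ a b) c = rf G a (rf G b c) := by
  have h := congrArg Prod.fst (G.r_rule1 a b c)
  simpa [rf, rs] using h

lemma rule2s (a b c : A) :
    rs G a (G.circ b c) = rs G (rs G a b) c := by
  have h := congrArg Prod.snd (G.r_rule2 a b c)
  simpa [rf, rs] using h

lemma b1 (a b c : A) :
    rf G (rf G a b) (rf G (rs G a b) c) = rf G a (rf G b c) := by
  rw [← rule1f G (rf G a b) (rs G a b) c, rcomp, rule1f]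

lemma b3 (a b c : A) :
    rs G (rs G a b) c = rs G (rs G a (rf G b c)) (rs G b c) := by
  rw [← rule2s G a b c, ← rcomp G b c, rule2s]

lemma prodL (a b c : A) :
    G.circ (rf G (rf G a b) (rf G (rs G a b) c))
      (G.circ (rs G (rf G a b) (rf G (rs G a b) c)) (rs G (rs G a b) c)) =
      G.circ a (G.circ b c) := by
  rw [← G.circ_assoc, rcomp, G.circ_assoc, rcomp, ← G.circ_assoc, rcomp, G.circ_assoc]

lemma prodR (a b c : A) :
    G.circ (rf G a (rf G b c))
      (G.circ (rf G (rs G a (rf G b c)) (rs G b c)) (rs G (rs G a (rf G b c)) (rs G b c))) =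
      G.circ a (G.circ b c) := by
  rw [rcomp, ← G.circ_assoc, rcomp, G.circ_assoc, rcomp]

lemma b2 (a b c : A) :
    rs G (rf G a b) (rf G (rs G a b) c) = rf G (rs G a (rf G b c)) (rs G b c) := by
  have h := (prodL G a b c).trans (prodR G a b c).symm
  rw [b1 G a b c] at h
  have h' := cancel_left G h
  rw [b3 G a b c] at h'
  exact cancel_right G h'

lemma braidL {X : Type*} (q : A × A × A × X) :
    stepR G.r (stepK (stepR G.r) (stepR G.r q)) =
      stepK (stepR G.r) (stepR G.r (stepK (stepR G.r) q)) := by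
  obtain ⟨a, b, c, x⟩ := q
  dsimp only [stepR, stepK]
  refine Prod.ext ?_ (Prod.ext ?_ (Prod.ext ?_ rfl))
  · exact b1 G a b c
  · exact b2 G a b c
  · exact b3 G a b c

lemma commL {X : Type*} (k : A × X → A × X) (q : A × A × A × X) :
    stepR G.r (stepK (stepK k) q) = stepK (stepK k) (stepR G.r q) := rfl

lemma reflL {X : Type*} (k : A × X → A × X)
    (href : ∀ p : A × A × X,
      stepR G.r (stepK k (stepR G.r (stepK k p))) =
        stepK k (stepR G.r (stepK k (stepR G.r p))))
    (q : A × A × A × X) :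
    stepK (stepR G.r) (stepK (stepK k) (stepK (stepR G.r) (stepK (stepK k) q))) =
      stepK (stepK k) (stepK (stepR G.r) (stepK (stepK k) (stepK (stepR G.r) q))) :=
  congrArg (fun z => (q.1, z)) (href q.2)

end BGaux

/-- For a generalized braided action `(X, m_X, k)`, the amplified map
`k_Y = (r × id)(id × k)(r × id)` satisfies the reflection equation over `Y = A × X`. -/
theorem amplified_solves_reflection {A X : Type*} (G : BraidedGroup A)
    (mX : A → X → X)
    (hmX_e : ∀ x, mX G.ce x = x)
    (hmX : ∀ a b x, mX (G.circ a b) x = mX a (mX b x))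
    (k : A × X → A × X)
    (h1 : ∀ p : A × A × X,
      k (collM G.circ p) = collM G.circ (stepK k (stepR G.r (stepK k p))))
    (h2 : ∀ p : A × A × X,
      k (collMX mX p) = collMX mX (stepR G.r (stepK k (stepR G.r p))))
    (h3 : ∀ x : X, k (G.ce, x) = (G.ce, x))
    (href : ∀ p : A × A × X,
      stepR G.r (stepK k (stepR G.r (stepK k p))) =
        stepK k (stepR G.r (stepK k (stepR G.r p))))
    (kY : A × (A × X) → A × (A × X))
    (hkY : ∀ q, kY q = stepR G.r (stepK k (stepR G.r q))) :
    ∀ p : A × A × (A × X),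
      stepR G.r (stepK kY (stepR G.r (stepK kY p))) =
        stepK kY (stepR G.r (stepK kY (stepR G.r p))) := by
  have hK : ∀ q : A × A × (A × X),
      stepK kY q = stepK (stepR G.r) (stepK (stepK k) (stepK (stepR G.r) q)) := by
    intro q
    show (q.1, kY q.2) = _
    rw [hkY]
    rfl
  intro p
  simp only [hK]
  rw [← BGaux.braidL G (stepK (stepK k) (stepK (stepR G.r) p))]
  rw [← BGaux.commL G k (stepK (stepR G.r) (stepR G.r (stepK (stepK k) (stepK (stepR G.r) p))))]
  rw [BGaux.commL G k (stepK (stepR G.r) p)]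
  rw [BGaux.braidL G (stepK (stepK k) (stepK (stepR G.r) (stepK (stepK k) (stepR G.r (stepK (stepR G.r) p)))))]
  rw [BGaux.reflL G k href (stepR G.r (stepK (stepR G.r) p))]
  rw [← BGaux.braidL G p]
  rw [BGaux.commL G k (stepK (stepR G.r) (stepK (stepK k) (stepR G.r (stepK (stepR G.r) (stepR G.r p)))))]
  rw [← BGaux.commL G k (stepK (stepR G.r) (stepR G.r p))]
  rw [BGaux.braidL G (stepK (stepK k) (stepK (stepR G.r) (stepR G.r p)))]
end

section
/- Let (A, ∘, r) be a group with braiding, r(a,b) = (a ▷ b, a ◁ b). Then (a₁, a₂) ∘_⋈ (b₁, b₂) := (a₁ ∘ (a₂ ▷ b₁), (a₂ ◁ b₁) ∘ b₂) defines a group structure on A × A with unit (e, e) and inverse (a, b)⁻¹ = (b̄ ▷ ā, b̄ ◁ ā), and the multiplication map m_A: (A × A, ∘_⋈) → (A, ∘), (a, b) ↦ a ∘ b, is a group homomorphism. -/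
/-- The twisted product `∘_⋈` on `A × A` is a group structure with unit `(e, e)`,
inverse `(a, b)⁻¹ = (b̄ ▷ ā, b̄ ◁ ā)`, and the multiplication map is a homomorphism. -/
theorem twistedProduct_group {A : Type*} (G : BraidedGroup A)
    (tm : A × A → A × A → A × A)
    (htm : ∀ p q, tm p q =
      (G.circ p.1 ((G.r (p.2, q.1)).1), G.circ ((G.r (p.2, q.1)).2) q.2)) :
    (∀ p q s, tm (tm p q) s = tm p (tm q s)) ∧
    (∀ p, tm (G.ce, G.ce) p = p) ∧
    (∀ p, tm p (G.ce, G.ce) = p) ∧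
    (∀ p : A × A, tm p (G.r (G.cinv p.2, G.cinv p.1)) = (G.ce, G.ce)) ∧
    (∀ p : A × A, tm (G.r (G.cinv p.2, G.cinv p.1)) p = (G.ce, G.ce)) ∧
    (∀ p q, G.circ (tm p q).1 (tm p q).2 = G.circ (G.circ p.1 p.2) (G.circ q.1 q.2)) := by

  have h1a : ∀ a b c, (G.r (G.circ a b, c)).1 = (G.r (a, (G.r (b, c)).1)).1 :=
    fun a b c => by rw [G.r_rule1]
  have h1b : ∀ a b c, (G.r (G.circ a b, c)).2
      = G.circ (G.r (a, (G.r (b, c)).1)).2 (G.r (b, c)).2 :=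
    fun a b c => congrArg Prod.snd (G.r_rule1 a b c)
  have h2a : ∀ a b c, (G.r (a, G.circ b c)).1
      = G.circ (G.r (a, b)).1 (G.r ((G.r (a, b)).2, c)).1 :=
    fun a b c => congrArg Prod.fst (G.r_rule2 a b c)
  have h2b : ∀ a b c, (G.r (a, G.circ b c)).2 = (G.r ((G.r (a, b)).2, c)).2 :=
    fun a b c => by rw [G.r_rule2]
  have u1a : ∀ a, (G.r (a, G.ce)).1 = G.ce := fun a => congrArg Prod.fst (G.r_unit1 a)
  have u1b : ∀ a, (G.r (a, G.ce)).2 = a := fun a => congrArg Prod.snd (G.r_unit1 a)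
  have u2a : ∀ a, (G.r (G.ce, a)).1 = a := fun a => congrArg Prod.fst (G.r_unit2 a)
  have u2b : ∀ a, (G.r (G.ce, a)).2 = G.ce := fun a => congrArg Prod.snd (G.r_unit2 a)
  refine ⟨?_, ?_, ?_, ?_, ?_, ?_⟩
  · intro p q s
    simp only [htm]
    refine Prod.ext ?_ ?_ <;>
      simp only [h1a, h1b, h2a, h2b, G.circ_assoc]
  · intro p
    simp only [htm, u2a, u2b, G.ce_circ]
  · intro p
    simp only [htm, u1a, u1b, G.circ_ce]
  · intro p
    simp only [htm]
    refine Prod.ext ?_ ?_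
    · show G.circ p.1 (G.r (p.2, (G.r (G.cinv p.2, G.cinv p.1)).1)).1 = G.ce
      rw [← h1a, G.circ_cinv, u2a, G.circ_cinv]
    · show G.circ (G.r (p.2, (G.r (G.cinv p.2, G.cinv p.1)).1)).2
        (G.r (G.cinv p.2, G.cinv p.1)).2 = G.ce
      rw [← h1b, G.circ_cinv, u2b]
  · intro p
    simp only [htm]
    refine Prod.ext ?_ ?_
    · show G.circ (G.r (G.cinv p.2, G.cinv p.1)).1
        (G.r ((G.r (G.cinv p.2, G.cinv p.1)).2, p.1)).1 = G.ce
      rw [← h2a, G.cinv_circ, u1a]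
    · show G.circ (G.r ((G.r (G.cinv p.2, G.cinv p.1)).2, p.1)).2 p.2 = G.ce
      rw [← h2b, G.cinv_circ, u1b, G.cinv_circ]
  · intro p q
    simp only [htm]
    show G.circ (G.circ p.1 (G.r (p.2, q.1)).1) (G.circ (G.r (p.2, q.1)).2 q.2) = _
    rw [G.circ_assoc, ← G.circ_assoc (G.r (p.2, q.1)).1, G.r_comp,
      ← G.circ_assoc, ← G.circ_assoc, G.circ_assoc p.1 p.2]
    simp only [G.circ_assoc]
end

section
/- Let (A, ∘, ·) be a skew brace with braiding r determined by a ▷ b = λ_a(b) = a⁻¹ · (a ∘ b) and (a▷b) ∘ (a◁b) = a ∘ b. Define k: A × A → A × A by k = r². Then the first component of k(a, ā ∘ b) equals b⁻¹ · a · b; that is, the family π_b(a) = b⁻¹ · a · b recovers the standard skew brace action from k = r². -/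
/-- For `k = r²`, the first component of `k(a, ā ∘ b)` is `b⁻¹ · a · b`:
the standard skew brace action. -/
theorem rsq_gives_standard_action {A : Type*} (B : SkewBrace A)
    (r : A × A → A × A)
    (hr : ∀ a b, r (a, b) =
      (B.lam a b, B.circ (B.cinv (B.lam a b)) (B.circ a b))) :
    ∀ a b : A, (r (r (a, B.circ (B.cinv a) b))).1 = B.mul (B.mul (B.inv b) a) b := by
  intro a b
  have hcc : ∀ x y : A, B.circ x (B.circ (B.cinv x) y) = y := fun x y => by
    rw [← B.circ_assoc, B.circ_cinv, B.ce_circ]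
  have hinv : ∀ x y : A, B.inv (B.mul x y) = B.mul (B.inv y) (B.inv x) := by
    intro x y
    have h : B.mul (B.mul x y) (B.mul (B.inv y) (B.inv x)) = B.e := by
      rw [B.mul_assoc, ← B.mul_assoc y, B.mul_inv, B.e_mul, B.mul_inv]
    calc B.inv (B.mul x y) = B.mul (B.inv (B.mul x y))
          (B.mul (B.mul x y) (B.mul (B.inv y) (B.inv x))) := by rw [h, B.mul_e]
      _ = B.mul (B.inv y) (B.inv x) := by rw [← B.mul_assoc, B.inv_mul, B.e_mul]
  have hii : ∀ x : A, B.inv (B.inv x) = x := by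
    intro x
    calc B.inv (B.inv x) = B.mul (B.inv (B.inv x)) (B.mul (B.inv x) x) := by
          rw [B.inv_mul, B.mul_e]
      _ = x := by rw [← B.mul_assoc, B.inv_mul, B.e_mul]
  rw [hr, hr]
  simp only [SkewBrace.lam, hcc]
  rw [hinv, hii, B.mul_assoc]
end
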